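/- Let τ ∈ ℝ, A := !![1, τ; 0, 1] ∈ Matrix (Fin 2) (Fin 2) ℝ, and let m ≥ 1 and M ∈ Matrix (Fin m) (Fin m) ℝ be such that every complex eigenvalue λ of M (i.e., every λ ∈ spectrum ℂ of M mapped into ℂ) satisfies |λ| < 1. Then for every G ∈ Matrix (Fin 2) (Fin m) ℝ there exists a unique P ∈ Matrix (Fin 2) (Fin m) ℝ satisfying P = A·P·Mᵀ + G. -/

import Mathlib

open Matrix

/-- Algebraic core of Theorem 1 of the paper: the Stein-type equation `P = A P Mᵀ + G`
has a unique solution when all complex eigenvalues of `M` lie strictly inside the unit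
circle and `A` is the unipotent clock transition matrix. -/
theorem stmt_13 (τ : ℝ) (A : Matrix (Fin 2) (Fin 2) ℝ) (hA : A = !![1, τ; 0, 1])
    (m : ℕ) (hm : 1 ≤ m) (M : Matrix (Fin m) (Fin m) ℝ)
    (hM : ∀ lam ∈ spectrum ℂ (M.map (fun x : ℝ => (x : ℂ))), ‖lam‖ < 1) :
    ∀ G : Matrix (Fin 2) (Fin m) ℝ,
      ∃! P : Matrix (Fin 2) (Fin m) ℝ, P = A * P * Mᵀ + G := by
  -- 1 is not in the spectrum, hence 1 - M is a unit over ℝ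
  have h1 : (1 : ℂ) ∉ spectrum ℂ (M.map (fun x : ℝ => (x : ℂ))) := by
    intro h
    have := hM 1 h
    simp at this
  rw [spectrum.notMem_iff, _root_.map_one] at h1
  have hdetC : IsUnit ((1 - M.map (fun x : ℝ => (x : ℂ))).det) :=
    ((Matrix.isUnit_iff_isUnit_det _).mp h1)
  have hmapeq : (Complex.ofRealHom).mapMatrix ((1 : Matrix (Fin m) (Fin m) ℝ) - M)
      = 1 - M.map (fun x : ℝ => (x : ℂ)) := by
    rw [map_sub, _root_.map_one]
    rfl
  have hdetR : IsUnit (((1 : Matrix (Fin m) (Fin m) ℝ) - M).det) := by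
    rw [← hmapeq, ← RingHom.map_det] at hdetC
    have hne : (((1 : Matrix (Fin m) (Fin m) ℝ) - M).det : ℂ) ≠ 0 := hdetC.ne_zero
    have : ((1 : Matrix (Fin m) (Fin m) ℝ) - M).det ≠ 0 := by exact_mod_cast hne
    exact this.isUnit
  -- mulVec injectivity
  have hv : ∀ v : Fin m → ℝ, ((1 : Matrix (Fin m) (Fin m) ℝ) - M).mulVec v = 0 → v = 0 := by
    intro v hv0
    have := congrArg (((1 : Matrix (Fin m) (Fin m) ℝ) - M)⁻¹.mulVec ·) hv0
    simpa [Matrix.mulVec_mulVec, Matrix.nonsing_inv_mul _ hdetR, Matrix.mulVec_zero,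
      Matrix.one_mulVec] using this
  -- the Stein linear map
  set E := Matrix (Fin 2) (Fin m) ℝ
  let T : E →ₗ[ℝ] E :=
    { toFun := fun P => P - A * P * Mᵀ
      map_add' := by
        intro P Q
        rw [Matrix.mul_add, Matrix.add_mul]
        abel
      map_smul' := by
        intro c P
        rw [Matrix.mul_smul, Matrix.smul_mul, smul_sub]
        rfl }
  have hTinj : Function.Injective T := by
    rw [← LinearMap.ker_eq_bot, LinearMap.ker_eq_bot']
    intro P hP
    have hP' : P = A * P * Mᵀ := by
      have h0 : P - A * P * Mᵀ = 0 := hP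
      linear_combination (norm := module) h0
    -- entrywise
    have hentry : ∀ i j, P i j = ∑ k, (A * P) i k * M j k := by
      intro i j
      conv_lhs => rw [hP']
      simp [Matrix.mul_apply, Matrix.transpose_apply]
    have hAP0 : ∀ k, (A * P) 0 k = P 0 k + τ * P 1 k := by
      intro k
      rw [hA, Matrix.mul_apply, Fin.sum_univ_two]
      simp
    have hAP1 : ∀ k, (A * P) 1 k = P 1 k := by
      intro k
      rw [hA, Matrix.mul_apply, Fin.sum_univ_two]
      simp
    have key : ∀ v : Fin m → ℝ, (∀ j, v j = ∑ k, v k * M j k) → v = 0 := by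
      intro v hvj
      apply hv
      funext j
      have h2 : ((1 - M).mulVec v) j = v j - ∑ k, M j k * v k := by
        rw [Matrix.sub_mulVec, Matrix.one_mulVec]
        simp [Matrix.mulVec, dotProduct]
      rw [Pi.zero_apply, h2, hvj j, sub_eq_zero]
      exact Finset.sum_congr rfl (fun k _ => mul_comm _ _)
    have hrow1 : (fun j => P 1 j) = 0 := by
      apply key
      intro j
      have := hentry 1 j
      simpa only [hAP1] using this
    have hrow1' : ∀ j, P 1 j = 0 := fun j => congrFun hrow1 j
    have hrow0 : (fun j => P 0 j) = 0 := by
      apply key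
      intro j
      have := hentry 0 j
      simp only [hAP0, hrow1', mul_zero, add_zero] at this
      exact this
    ext i j
    fin_cases i
    · exact congrFun hrow0 j
    · exact hrow1' j
  have hTsurj : Function.Surjective T :=
    (LinearMap.injective_iff_surjective).mp hTinj
  intro G
  obtain ⟨P, hPG⟩ := hTsurj G
  refine ⟨P, ?_, ?_⟩
  · have h0 : P - A * P * Mᵀ = G := hPG
    linear_combination (norm := module) h0
  · intro Q hQ
    apply hTinj
    show Q - A * Q * Mᵀ = T P
    rw [show (T P : E) = G from hPG]
    linear_combination (norm := module) hQ
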